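/- Let n ≥ 1, m ≥ 1, let Ω ⊆ ℝ^n be open, let A be a real n×n matrix, and let Z(μ) = μ^m + Z_{m−1}μ^{m−1} + ⋯ + Z_0 be a monic real polynomial with constant coefficients. Call a tuple V = (V_0, …, V_{m−1}) of smooth functions V_j : Ω → ℝ a solution if there exists a map u : Ω → ℝ^n such that for every x ∈ Ω the identity (A + μI)·(Σ_{j=0}^{m−1} ∇V_j(x)μ^j) = Z(μ)·u(x) holds in ℝ^n[μ]. If V and W are solutions, then so is the tuple V*W defined pointwise by letting (V*W)_0(x), …, (V*W)_{m−1}(x) be the coefficients of the remainder of the polynomial (Σ_{j=0}^{m−1} V_j(x)μ^j)·(Σ_{j=0}^{m−1} W_j(x)μ^j) on division by the monic polynomial Z(μ). -/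

import Mathlib

open Polynomial

/-- The gradient of `f : ℝ^n → ℝ` at `x`: the vector of partial derivatives. -/
noncomputable def grad {n : ℕ} (f : (Fin n → ℝ) → ℝ) (x : Fin n → ℝ) : Fin n → ℝ :=
  fun i => fderiv ℝ f x (Pi.single i 1)

/-- `V = (V_0, …, V_{m−1})` is a solution of `(A + μI)∇V_μ ≡ 0 (mod Z)` on `Ω`:
the `V_k` are smooth on `Ω` and there is `u : Ω → ℝ^n` with
`(A + μI)·(Σ_k ∇V_k(x) μ^k) = Z(μ)·u(x)` (each row, as polynomials in `μ`). -/
def IsStarSolution (n m : ℕ) (Ω : Set (Fin n → ℝ)) (A : Matrix (Fin n) (Fin n) ℝ)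
    (Z : Polynomial ℝ) (V : ℕ → ((Fin n → ℝ) → ℝ)) : Prop :=
  (∀ k < m, ContDiffOn ℝ (⊤ : ℕ∞) (V k) Ω) ∧
  ∃ u : (Fin n → ℝ) → (Fin n → ℝ), ∀ x ∈ Ω, ∀ i : Fin n,
    (∑ j : Fin n, (C (A i j) + if i = j then X else 0) *
        (∑ k ∈ Finset.range m, C (grad (V k) x j) * X ^ k))
      = Z * C (u x i)

lemma grad_sum' {n : ℕ} {ι : Type*} (s : Finset ι) (f : ι → (Fin n → ℝ) → ℝ)
    (x : Fin n → ℝ) (h : ∀ i ∈ s, DifferentiableAt ℝ (f i) x) (j : Fin n) :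
    grad (fun y => ∑ i ∈ s, f i y) x j = ∑ i ∈ s, grad (f i) x j := by
  unfold grad
  rw [fderiv_fun_sum h]
  simp

lemma grad_mul' {n : ℕ} {f g : (Fin n → ℝ) → ℝ} {x : Fin n → ℝ}
    (hf : DifferentiableAt ℝ f x) (hg : DifferentiableAt ℝ g x) (j : Fin n) :
    grad (fun y => f y * g y) x j = grad f x j * g x + f x * grad g x j := by
  unfold grad
  rw [fderiv_fun_mul hf hg]
  simp
  ring

lemma grad_mul_const' {n : ℕ} {f : (Fin n → ℝ) → ℝ} {x : Fin n → ℝ}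
    (hf : DifferentiableAt ℝ f x) (d : ℝ) (j : Fin n) :
    grad (fun y => f y * d) x j = grad f x j * d := by
  unfold grad
  rw [fderiv_mul_const hf]
  simp [mul_comm]

lemma rep_sum (m : ℕ) (r : Polynomial ℝ) (h : r.degree < (m : ℕ)) :
    ∑ k ∈ Finset.range m, C (r.coeff k) * X ^ k = r := by
  rcases eq_or_ne r 0 with rfl | hr
  · simp
  · have h' : r.natDegree < m := (natDegree_lt_iff_degree_lt hr).mpr h
    conv_rhs => rw [r.as_sum_range' m h']
    simp [C_mul_X_pow_eq_monomial]


/-- The *-multiplication (nonlinear superposition principle): for the system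
`(A + μI)∇V_μ ≡ 0 (mod Z_μ)` with constant `A` and constant-coefficient monic
`Z(μ) = μ^m + Z_{m−1}μ^{m−1} + ⋯ + Z_0`, the solution space is closed under the
product `(V*W)_μ = V_μ·W_μ mod Z_μ` taken pointwise. -/
theorem stmt_6 (n m : ℕ) (hn : 1 ≤ n) (hm : 1 ≤ m)
    (Ω : Set (Fin n → ℝ)) (hΩ : IsOpen Ω)
    (A : Matrix (Fin n) (Fin n) ℝ) (Zc : ℕ → ℝ)
    (Z : Polynomial ℝ) (hZ : Z = X ^ m + ∑ j ∈ Finset.range m, C (Zc j) * X ^ j)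
    (V W : ℕ → ((Fin n → ℝ) → ℝ))
    (hV : IsStarSolution n m Ω A Z V) (hW : IsStarSolution n m Ω A Z W) :
    IsStarSolution n m Ω A Z
      (fun k x =>
        (((∑ j ∈ Finset.range m, C (V j x) * X ^ j) *
            (∑ j ∈ Finset.range m, C (W j x) * X ^ j)) %ₘ Z).coeff k) := by
  -- basic facts about Z
  have hdegsum : (∑ j ∈ Finset.range m, C (Zc j) * X ^ j).degree < (m : WithBot ℕ) := by
    apply lt_of_le_of_lt (degree_sum_le _ _)
    rw [Finset.sup_lt_iff (by exact_mod_cast WithBot.bot_lt_coe m)]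
    intro k hk
    exact lt_of_le_of_lt (degree_C_mul_X_pow_le _ _)
      (by exact_mod_cast Finset.mem_range.mp hk)
  have hmonic : Z.Monic := by rw [hZ]; exact monic_X_pow_add hdegsum
  have hdegZ : Z.degree = (m : ℕ) := by
    rw [hZ, degree_add_eq_left_of_degree_lt (by rwa [degree_X_pow]), degree_X_pow]
  -- abbreviations
  set P : (Fin n → ℝ) → Polynomial ℝ := fun x => ∑ j ∈ Finset.range m, C (V j x) * X ^ j
    with hPdef
  set Q : (Fin n → ℝ) → Polynomial ℝ := fun x => ∑ j ∈ Finset.range m, C (W j x) * X ^ j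
    with hQdef
  set c : ℕ → ℕ → ℕ → ℝ := fun a b k => (((X : Polynomial ℝ) ^ (a + b)) %ₘ Z).coeff k
    with hcdef
  have hmodc : ∀ a b : ℕ, ((X : Polynomial ℝ) ^ (a + b)) %ₘ Z
      = ∑ k ∈ Finset.range m, C (c a b k) * X ^ k := by
    intro a b
    exact (rep_sum m _ (by rw [← hdegZ]; exact degree_modByMonic_lt _ hmonic)).symm
  -- key1 : pointwise expansion of the coefficients of the star product
  have key1 : ∀ (x : Fin n → ℝ) (k : ℕ), ((P x * Q x) %ₘ Z).coeff k
      = ∑ a ∈ Finset.range m, ∑ b ∈ Finset.range m, V a x * W b x * c a b k := by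
    intro x k
    have hPQ : P x * Q x = ∑ a ∈ Finset.range m, ∑ b ∈ Finset.range m,
        (V a x * W b x) • ((X : Polynomial ℝ) ^ (a + b)) := by
      rw [hPdef, hQdef]
      rw [Finset.sum_mul_sum]
      refine Finset.sum_congr rfl fun a _ => Finset.sum_congr rfl fun b _ => ?_
      rw [smul_eq_C_mul, C_mul, pow_add]
      ring
    have hmm : ∀ p : Polynomial ℝ, p %ₘ Z = modByMonicHom Z p := fun _ => rfl
    rw [hPQ, hmm, map_sum]
    simp only [map_sum, map_smul, finset_sum_coeff, coeff_smul, smul_eq_mul]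
    refine Finset.sum_congr rfl fun a _ => Finset.sum_congr rfl fun b _ => ?_
    simp only [hcdef, mul_assoc, hmm]
  -- differentiability of V, W on Ω
  have hVd : ∀ x ∈ Ω, ∀ a ∈ Finset.range m, DifferentiableAt ℝ (V a) x := by
    intro x hx a ha
    exact ((hV.1 a (Finset.mem_range.mp ha)).differentiableOn (by simp)).differentiableAt
      (hΩ.mem_nhds hx)
  have hWd : ∀ x ∈ Ω, ∀ a ∈ Finset.range m, DifferentiableAt ℝ (W a) x := by
    intro x hx a ha
    exact ((hW.1 a (Finset.mem_range.mp ha)).differentiableOn (by simp)).differentiableAt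
      (hΩ.mem_nhds hx)
  -- key3 : gradient of the coefficients
  have key3 : ∀ x ∈ Ω, ∀ (j : Fin n) (k : ℕ),
      grad (fun y => ((P y * Q y) %ₘ Z).coeff k) x j
        = ∑ a ∈ Finset.range m, ∑ b ∈ Finset.range m,
            (grad (V a) x j * W b x + V a x * grad (W b) x j) * c a b k := by
    intro x hx j k
    have hfun : (fun y => ((P y * Q y) %ₘ Z).coeff k)
        = fun y => ∑ a ∈ Finset.range m, ∑ b ∈ Finset.range m, V a y * W b y * c a b k :=
      funext fun y => key1 y k
    rw [hfun]
    rw [grad_sum' _ _ x (fun a ha => DifferentiableAt.fun_sum fun b hb =>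
      (((hVd x hx a ha).fun_mul (hWd x hx b hb)).mul_const _)) j]
    refine Finset.sum_congr rfl fun a ha => ?_
    rw [grad_sum' _ _ x (fun b hb => (((hVd x hx a ha).fun_mul (hWd x hx b hb)).mul_const _)) j]
    refine Finset.sum_congr rfl fun b hb => ?_
    rw [grad_mul_const' ((hVd x hx a ha).fun_mul (hWd x hx b hb)) _ j,
      grad_mul' (hVd x hx a ha) (hWd x hx b hb) j]
  -- L1 : generic resummation lemma
  have L1 : ∀ e : ℕ → ℕ → ℝ,
      (∑ k ∈ Finset.range m,
        C (∑ a ∈ Finset.range m, ∑ b ∈ Finset.range m, e a b * c a b k) * X ^ k)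
      = ∑ a ∈ Finset.range m, ∑ b ∈ Finset.range m,
          e a b • (((X : Polynomial ℝ) ^ (a + b)) %ₘ Z) := by
    intro e
    have h1 : ∀ a b : ℕ, e a b • (((X : Polynomial ℝ) ^ (a + b)) %ₘ Z)
        = ∑ k ∈ Finset.range m, C (e a b * c a b k) * X ^ k := by
      intro a b
      rw [hmodc a b, Finset.smul_sum]
      exact Finset.sum_congr rfl fun k _ => by rw [smul_eq_C_mul, ← mul_assoc, ← C_mul]
    simp only [h1]
    simp only [map_sum, Finset.sum_mul]
    rw [Finset.sum_comm]
    exact Finset.sum_congr rfl fun a _ => Finset.sum_comm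
  -- key4 : the gradient polynomial of the star product
  have key4 : ∀ x ∈ Ω, ∀ j : Fin n,
      (∑ k ∈ Finset.range m, C (grad (fun y => ((P y * Q y) %ₘ Z).coeff k) x j) * X ^ k)
      = ((∑ a ∈ Finset.range m, C (grad (V a) x j) * X ^ a) * Q x
          + P x * (∑ b ∈ Finset.range m, C (grad (W b) x j) * X ^ b)) %ₘ Z := by
    intro x hx j
    simp only [key3 x hx j]
    rw [L1 (fun a b => grad (V a) x j * W b x + V a x * grad (W b) x j)]
    have hexp : (∑ a ∈ Finset.range m, C (grad (V a) x j) * X ^ a) * Q x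
        + P x * (∑ b ∈ Finset.range m, C (grad (W b) x j) * X ^ b)
        = ∑ a ∈ Finset.range m, ∑ b ∈ Finset.range m,
            (grad (V a) x j * W b x + V a x * grad (W b) x j) • ((X : Polynomial ℝ) ^ (a + b)) := by
      rw [hPdef, hQdef, Finset.sum_mul_sum, Finset.sum_mul_sum, ← Finset.sum_add_distrib]
      refine Finset.sum_congr rfl fun a _ => ?_
      rw [← Finset.sum_add_distrib]
      refine Finset.sum_congr rfl fun b _ => ?_
      rw [smul_eq_C_mul, pow_add]
      simp only [C_add, C_mul]
      ring
    rw [hexp]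
    have hmm : ∀ p : Polynomial ℝ, p %ₘ Z = modByMonicHom Z p := fun _ => rfl
    rw [hmm, map_sum]
    refine Finset.sum_congr rfl fun a _ => ?_
    rw [map_sum]
    refine Finset.sum_congr rfl fun b _ => ?_
    rw [map_smul]
    rfl
  obtain ⟨hVs, u, hu⟩ := hV
  obtain ⟨hWs, w, hw⟩ := hW
  constructor
  · -- smoothness
    intro k hk
    have hckd : ContDiffOn ℝ (⊤ : ℕ∞) (fun x => ∑ a ∈ Finset.range m, ∑ b ∈ Finset.range m,
        V a x * W b x * c a b k) Ω := by
      apply ContDiffOn.sum; intro a ha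
      apply ContDiffOn.sum; intro b hb
      exact ((hVs a (Finset.mem_range.mp ha)).mul (hWs b (Finset.mem_range.mp hb))).mul
        contDiffOn_const
    exact hckd.congr fun x _ => key1 x k
  · -- the polynomial identity
    refine ⟨fun x i => ((∑ j : Fin n, (C (A i j) + if i = j then X else 0) *
        (∑ k ∈ Finset.range m, C (grad (fun y => ((P y * Q y) %ₘ Z).coeff k) x j) * X ^ k))
          /ₘ Z).coeff 0, ?_⟩
    intro x hx i
    show (∑ j : Fin n, (C (A i j) + if i = j then X else 0) *
        (∑ k ∈ Finset.range m, C (grad (fun y => ((P y * Q y) %ₘ Z).coeff k) x j) * X ^ k))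
      = Z * C (((∑ j : Fin n, (C (A i j) + if i = j then X else 0) *
          (∑ k ∈ Finset.range m, C (grad (fun y => ((P y * Q y) %ₘ Z).coeff k) x j) * X ^ k))
            /ₘ Z).coeff 0)
    set T : Fin n → Polynomial ℝ := fun j =>
      (∑ a ∈ Finset.range m, C (grad (V a) x j) * X ^ a) * Q x
        + P x * (∑ b ∈ Finset.range m, C (grad (W b) x j) * X ^ b) with hTdef
    set S : Polynomial ℝ := ∑ j : Fin n, (C (A i j) + if i = j then X else 0) *
        (∑ k ∈ Finset.range m, C (grad (fun y => ((P y * Q y) %ₘ Z).coeff k) x j) * X ^ k)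
      with hSdef
    -- degree bound for S
    have hdegS : S.degree ≤ (m : WithBot ℕ) := by
      rw [hSdef]
      refine le_trans (degree_sum_le _ _) ?_
      rw [Finset.sup_le_iff]
      intro j _
      refine le_trans (degree_mul_le _ _) ?_
      have h1 : (C (A i j) + if i = j then X else 0).degree ≤ 1 := by
        split_ifs
        · exact le_trans (degree_add_le _ _)
            (max_le (le_trans degree_C_le (by norm_num)) degree_X_le)
        · rw [add_zero]; exact le_trans degree_C_le (by norm_num)
      have h2 : (∑ k ∈ Finset.range m,
          C (grad (fun y => ((P y * Q y) %ₘ Z).coeff k) x j) * X ^ k).degree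
            ≤ ((m - 1 : ℕ) : WithBot ℕ) := by
        refine le_trans (degree_sum_le _ _) ?_
        rw [Finset.sup_le_iff]
        intro k hk
        refine le_trans (degree_C_mul_X_pow_le _ _) ?_
        exact_mod_cast Nat.le_sub_one_of_lt (Finset.mem_range.mp hk)
      refine le_trans (add_le_add h1 h2) ?_
      have hcast : ((1 : WithBot ℕ)) + ((m - 1 : ℕ) : WithBot ℕ) = ((1 + (m - 1) : ℕ) : WithBot ℕ) := by
        push_cast
        ring
      rw [hcast]
      exact_mod_cast (by omega : 1 + (m - 1) ≤ m)
    -- divisibility of S by Z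
    have hmd : ∀ j : Fin n, T j %ₘ Z = T j - Z * (T j /ₘ Z) :=
      fun j => eq_sub_of_add_eq (modByMonic_add_div (T j) Z)
    have h2 : S = (∑ j : Fin n, (C (A i j) + if i = j then X else 0) * T j)
        - Z * ∑ j : Fin n, (C (A i j) + if i = j then X else 0) * (T j /ₘ Z) := by
      rw [hSdef]
      rw [show (∑ j : Fin n, (C (A i j) + if i = j then X else 0) *
          (∑ k ∈ Finset.range m, C (grad (fun y => ((P y * Q y) %ₘ Z).coeff k) x j) * X ^ k))
        = ∑ j : Fin n, (C (A i j) + if i = j then X else 0) * (T j %ₘ Z) from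
          Finset.sum_congr rfl fun j _ => by rw [key4 x hx j, hTdef]]
      rw [Finset.mul_sum, ← Finset.sum_sub_distrib]
      refine Finset.sum_congr rfl fun j _ => ?_
      rw [hmd j]
      ring
    have h3 : (∑ j : Fin n, (C (A i j) + if i = j then X else 0) * T j)
        = Z * C (u x i) * Q x + P x * (Z * C (w x i)) := by
      have hsplit : ∀ j : Fin n, (C (A i j) + if i = j then X else 0) * T j
          = ((C (A i j) + if i = j then X else 0) *
              (∑ a ∈ Finset.range m, C (grad (V a) x j) * X ^ a)) * Q x
            + P x * ((C (A i j) + if i = j then X else 0) *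
              (∑ b ∈ Finset.range m, C (grad (W b) x j) * X ^ b)) := by
        intro j; rw [hTdef]; ring
      simp only [hsplit]
      rw [Finset.sum_add_distrib, ← Finset.sum_mul, ← Finset.mul_sum, hu x hx i, hw x hx i]
    have hdvd : Z ∣ S := by
      rw [h2, h3]
      have d1 : Z ∣ Z * C (u x i) * Q x := ⟨C (u x i) * Q x, by ring⟩
      have d2 : Z ∣ P x * (Z * C (w x i)) := ⟨P x * C (w x i), by ring⟩
      exact dvd_sub (dvd_add d1 d2) (dvd_mul_right _ _)
    -- conclude
    have h0 : S %ₘ Z = 0 := (modByMonic_eq_zero_iff_dvd hmonic).mpr hdvd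
    have hfac : S = Z * (S /ₘ Z) := by
      conv_lhs => rw [← modByMonic_add_div S Z]
      rw [h0, zero_add]
    have hq : S /ₘ Z = C ((S /ₘ Z).coeff 0) := by
      rcases eq_or_ne (S /ₘ Z) 0 with h | h
      · rw [h]; simp
      · apply eq_C_of_degree_le_zero
        have hdm := degree_mul (p := Z) (q := S /ₘ Z)
        rw [← hfac, hdegZ] at hdm
        have hle : (m : WithBot ℕ) + (S /ₘ Z).degree ≤ (m : WithBot ℕ) := hdm ▸ hdegS
        rw [degree_eq_natDegree h] at hle ⊢
        have h4 : m + (S /ₘ Z).natDegree ≤ m := by exact_mod_cast hle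
        have h5 : (S /ₘ Z).natDegree = 0 := by omega
        rw [h5]
        exact le_refl _
      -- end hq
    conv_lhs => rw [hfac]
    exact congrArg _ hq
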